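/- For all a, b > 0 and 0 ≤ t ≤ 1, exp((log(b/a) + 1 - b/a) t) ≤ (a♯_t b)/(a∇_t b) ≤ exp((log(b/a) - (b-a)/(a∇_t b)) t). -/

import Mathlib

open Real

theorem stmt_19 (a b t : ℝ) (ha : 0 < a) (hb : 0 < b) (ht0 : 0 ≤ t) (ht1 : t ≤ 1) :
    Real.exp ((Real.log (b / a) + 1 - b / a) * t) ≤
        (a ^ (1 - t) * b ^ t) / ((1 - t) * a + t * b) ∧
      (a ^ (1 - t) * b ^ t) / ((1 - t) * a + t * b) ≤
        Real.exp ((Real.log (b / a) - (b - a) / ((1 - t) * a + t * b)) * t) := by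
  set m : ℝ := (1 - t) * a + t * b with hm_def
  have hm : 0 < m := by
    rcases lt_or_eq_of_le ht1 with h | h
    · nlinarith
    · subst h
      have : m = b := by rw [hm_def]; ring
      linarith
  have hkey : a ^ (1 - t) * b ^ t / m =
      Real.exp (Real.log a * (1 - t) + Real.log b * t - Real.log m) := by
    rw [Real.exp_sub, Real.exp_add, ← Real.rpow_def_of_pos ha, ← Real.rpow_def_of_pos hb,
      Real.exp_log hm]
  have h1 : Real.log (m / a) ≤ m / a - 1 := Real.log_le_sub_one_of_pos (by positivity)
  have h2 : Real.log (a / m) ≤ a / m - 1 := Real.log_le_sub_one_of_pos (by positivity)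
  rw [Real.log_div hm.ne' ha.ne'] at h1
  rw [Real.log_div ha.ne' hm.ne'] at h2
  have hlogba : Real.log (b / a) = Real.log b - Real.log a := Real.log_div hb.ne' ha.ne'
  have hma : m / a = 1 - t + t * (b / a) := by field_simp [hm_def]; rw [hm_def]; ring
  have ham : a / m = 1 - t * ((b - a) / m) := by field_simp [hm_def]; ring
  constructor
  · rw [hkey, Real.exp_le_exp, hlogba]
    rw [hma] at h1
    nlinarith [h1]
  · rw [hkey, Real.exp_le_exp, hlogba]
    rw [ham] at h2
    nlinarith [h2]
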